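/- Fix μ ∈ (0, 1/2], δ > 0 and α = μ(1−μ). For all r̃, R̃ ∈ ℝ and q₂, v₂ ∈ ℝ² with 1 + √δ r̃ > 0 and all four denominators below nonzero, the once-rescaled Hamiltonian satisfies the exact identity H̃_res^δ(r̃, R̃, q₂, v₂) = [ (1/2)|v₂|² − (1−μ)/|q₂ + (μ,0)| − μ/|q₂ − (1−μ,0)| − q₂×v₂ ] + (1/2)[R̃²/α + α r̃²] + (δ/2)|v₂|² + f̃^δ(r̃, q₂, v₂) + g̃^δ(r̃, q₂), where f̃^δ(r̃, q₂, v₂) = [δ(q₂×v₂)² + (2√δ r̃ + δ r̃²)(2α q₂×v₂ − α² r̃²)] / (2α(1 + √δ r̃)²) and g̃^δ(r̃, q₂) = [(1−μ)/|q₂ + (μ,0)| − (1−μ)/|q₂ + μ(1+√δ r̃)(1,0)|] + [μ/|q₂ − (1−μ,0)| − μ/|q₂ − (1−μ)(1+√δ r̃)(1,0)|]. -/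

import Mathlib

open Real

noncomputable section

/-- The plane `ℝ²` with the Euclidean norm. -/
abbrev V2 : Type := EuclideanSpace ℝ (Fin 2)

def vec2 (a b : ℝ) : V2 := WithLp.toLp 2 ![a, b]

/-- Planar cross product `a×b = a₁b₂ − a₂b₁`. -/
def cross (a b : V2) : ℝ := a 0 * b 1 - a 1 * b 0

/-- The 3BP Hamiltonian in Hadjidemetriou rotating coordinates. -/
def Hrot (μ δ : ℝ) (r R Ω : ℝ) (q2 p2 : V2) : ℝ :=
  ((δ + 1) / (2 * δ)) * ‖p2‖ ^ 2
    - δ * ((1 - μ) / ‖q2 + r • vec2 μ 0‖ + μ / ‖q2 - r • vec2 (1 - μ) 0‖)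
    + R ^ 2 / (2 * (μ * (1 - μ)))
    + (Ω - cross q2 p2) ^ 2 / (2 * (μ * (1 - μ)) * r ^ 2)
    - (μ * (1 - μ)) / r

/-- The once-rescaled Hamiltonian
`H̃_res^δ(r̃, R̃, q₂, v₂) = (1/δ)[H_rot^δ(1 + √δ r̃, √δ R̃, Ω = α, q₂, δv₂) + α/2]`. -/
def Htil (μ δ : ℝ) (rt Rt : ℝ) (q2 v2 : V2) : ℝ :=
  (1 / δ) * (Hrot μ δ (1 + Real.sqrt δ * rt) (Real.sqrt δ * Rt) (μ * (1 - μ)) q2 (δ • v2)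
    + μ * (1 - μ) / 2)

/-- Exact decomposition of the once-rescaled Hamiltonian into the RPC3BP part, the
rotator, and the remainder `(δ/2)|v₂|² + f̃^δ + g̃^δ`. -/
theorem Htil_decomposition (μ δ : ℝ) (hμ : μ ∈ Set.Ioc (0 : ℝ) (1 / 2)) (hδ : 0 < δ)
    (rt Rt : ℝ) (q2 v2 : V2)
    (hr : 0 < 1 + Real.sqrt δ * rt)
    (h1 : q2 + vec2 μ 0 ≠ 0)
    (h2 : q2 - vec2 (1 - μ) 0 ≠ 0)
    (h3 : q2 + (μ * (1 + Real.sqrt δ * rt)) • vec2 1 0 ≠ 0)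
    (h4 : q2 - ((1 - μ) * (1 + Real.sqrt δ * rt)) • vec2 1 0 ≠ 0) :
    let α := μ * (1 - μ)
    Htil μ δ rt Rt q2 v2 =
      ((1 / 2) * ‖v2‖ ^ 2 - (1 - μ) / ‖q2 + vec2 μ 0‖ - μ / ‖q2 - vec2 (1 - μ) 0‖
          - cross q2 v2)
        + (1 / 2) * (Rt ^ 2 / α + α * rt ^ 2)
        + (δ / 2) * ‖v2‖ ^ 2
        + (δ * (cross q2 v2) ^ 2
            + (2 * Real.sqrt δ * rt + δ * rt ^ 2) * (2 * α * cross q2 v2 - α ^ 2 * rt ^ 2))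
          / (2 * α * (1 + Real.sqrt δ * rt) ^ 2)
        + (((1 - μ) / ‖q2 + vec2 μ 0‖
              - (1 - μ) / ‖q2 + (μ * (1 + Real.sqrt δ * rt)) • vec2 1 0‖)
           + (μ / ‖q2 - vec2 (1 - μ) 0‖
              - μ / ‖q2 - ((1 - μ) * (1 + Real.sqrt δ * rt)) • vec2 1 0‖)) := by
  intro α
  have hμ0 : 0 < μ := hμ.1
  have hμ1 : μ < 1 := lt_of_le_of_lt hμ.2 (by norm_num)
  have hα : (0:ℝ) < α := mul_pos hμ0 (by linarith)
  set s : ℝ := Real.sqrt δ with hs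
  have hs2 : s ^ 2 = δ := Real.sq_sqrt hδ.le
  have hvec : ∀ a : ℝ, vec2 a 0 = a • vec2 1 0 := by
    intro a; ext i; fin_cases i <;> simp [vec2]
  have hsm1 : (1 + s * rt) • vec2 μ 0 = (μ * (1 + s * rt)) • vec2 1 0 := by
    rw [hvec, smul_smul, mul_comm]
  have hsm2 : (1 + s * rt) • vec2 (1 - μ) 0 = ((1 - μ) * (1 + s * rt)) • vec2 1 0 := by
    rw [hvec, smul_smul, mul_comm]
  have hcross : cross q2 (δ • v2) = δ * cross q2 v2 := by
    simp [cross]; ring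
  have hnorm : ‖δ • v2‖ ^ 2 = δ ^ 2 * ‖v2‖ ^ 2 := by
    rw [norm_smul, mul_pow, Real.norm_eq_abs, sq_abs]
  have hn1 : ‖q2 + vec2 μ 0‖ ≠ 0 := norm_ne_zero_iff.mpr h1
  have hn2 : ‖q2 - vec2 (1 - μ) 0‖ ≠ 0 := norm_ne_zero_iff.mpr h2
  have hn3 : ‖q2 + (μ * (1 + s * rt)) • vec2 1 0‖ ≠ 0 := norm_ne_zero_iff.mpr h3
  have hn4 : ‖q2 - ((1 - μ) * (1 + s * rt)) • vec2 1 0‖ ≠ 0 := norm_ne_zero_iff.mpr h4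
  have hrne : 1 + s * rt ≠ 0 := ne_of_gt hr
  have hαne : α ≠ 0 := ne_of_gt hα
  have hsne : s ≠ 0 := by
    intro h; rw [h] at hs2; simp at hs2; exact absurd hs2.symm (ne_of_gt hδ)
  rw [Htil, Hrot, hcross, hnorm, hsm1, hsm2]
  set c : ℝ := cross q2 v2
  set N : ℝ := ‖v2‖ ^ 2
  set n1 := ‖q2 + vec2 μ 0‖
  set n2 := ‖q2 - vec2 (1 - μ) 0‖
  set n3 := ‖q2 + (μ * (1 + s * rt)) • vec2 1 0‖
  set n4 := ‖q2 - ((1 - μ) * (1 + s * rt)) • vec2 1 0‖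
  simp only [← hs]
  rw [← hs2]
  simp only [show μ * (1 - μ) = α from rfl]
  field_simp
  ring
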